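/- Let w : ℝ₊ → (0,∞)^d be a global solution of the Lotka–Volterra system w_i' = w_i(b_i − Σ_j a_{i,j} w_j) (with A, b as given), whose coordinates are bounded away from 0 and ∞. Then for each i ∈ {1,...,d}, the time average (1/t)·∫₀ᵗ w_i(s) ds converges to i/(d+1) as t → ∞. -/

import Mathlib

open Set Filter

/-- for a global solution of the Lotka–Volterra system whose
coordinates are bounded away from 0 and ∞, the time averages converge:
(1/t)∫₀ᵗ w_i → i/(d+1) as t → ∞. -/
theorem stmt_19 (d : ℕ) (hd : 0 < d)
    (F : (Fin d → ℝ) → Fin d → ℝ)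
    (hF : ∀ v i, F v i =
      if h : (i : ℕ) + 1 < d then v i * (v ⟨(i : ℕ) + 1, h⟩ - v ⟨0, hd⟩ - v i)
      else v i * (1 - v ⟨0, hd⟩ - v i))
    (w : ℝ → Fin d → ℝ)
    (hode : ∀ t : ℝ, 0 ≤ t → ∀ i,
      HasDerivWithinAt (fun s => w s i) (F (w t) i) (Ici (0 : ℝ)) t)
    (c C : ℝ) (hc : 0 < c)
    (hbdd : ∀ t : ℝ, 0 ≤ t → ∀ i, c ≤ w t i ∧ w t i ≤ C) :
    ∀ i : Fin d,
      Tendsto (fun t : ℝ => (1 / t) * ∫ s in (0 : ℝ)..t, w s i)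
        atTop (nhds (((i : ℕ) + 1 : ℝ) / (d + 1))) := by
  classical
  have hwpos : ∀ t : ℝ, 0 ≤ t → ∀ j, 0 < w t j := fun t ht j =>
    lt_of_lt_of_le hc (hbdd t ht j).1
  have hcont : ∀ j, ContinuousOn (fun s => w s j) (Ici 0) := fun j t ht =>
    (hode t ht j).continuousWithinAt
  set x : Fin d → ℝ → ℝ := fun j t => (1 / t) * ∫ s in (0:ℝ)..t, w s j with hxdef
  set D : Fin d → ℝ → ℝ := fun j s =>
    if h : (j : ℕ) + 1 < d then w s ⟨(j : ℕ) + 1, h⟩ - w s ⟨0, hd⟩ - w s j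
    else 1 - w s ⟨0, hd⟩ - w s j with hDdef
  have hDcont : ∀ j, ContinuousOn (D j) (Ici 0) := by
    intro j
    by_cases h : (j : ℕ) + 1 < d
    · simp only [hDdef, dif_pos h]
      exact ((hcont _).sub (hcont _)).sub (hcont j)
    · simp only [hDdef, dif_neg h]
      exact (continuousOn_const.sub (hcont _)).sub (hcont j)
  have hinteg : ∀ j, ∀ t : ℝ, 0 ≤ t →
      IntervalIntegrable (fun s => w s j) MeasureTheory.volume 0 t := by
    intro j t ht
    exact ((hcont j).mono (by rw [uIcc_of_le ht]; exact Icc_subset_Ici_self)).intervalIntegrable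
  -- FTC for log w_j
  have hftc : ∀ j, ∀ t : ℝ, 0 ≤ t →
      ∫ s in (0:ℝ)..t, D j s = Real.log (w t j) - Real.log (w 0 j) := by
    intro j t ht
    refine intervalIntegral.integral_eq_sub_of_hasDeriv_right_of_le
      (f := fun s => Real.log (w s j)) (f' := D j) ht ?_ ?_ ?_
    · exact ContinuousOn.log ((hcont j).mono Icc_subset_Ici_self)
        (fun s hs => (hwpos s hs.1 j).ne')
    · intro s hs
      have hda : HasDerivAt (fun u => w u j) (F (w s) j) s :=
        (hode s hs.1.le j).hasDerivAt (Ici_mem_nhds hs.1)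
      have hlog := hda.log (hwpos s hs.1.le j).ne'
      have heq : F (w s) j / w s j = D j s := by
        rw [hF]
        by_cases h : (j : ℕ) + 1 < d
        · rw [dif_pos h]
          simp only [hDdef, dif_pos h]
          exact mul_div_cancel_left₀ _ (hwpos s hs.1.le j).ne'
        · rw [dif_neg h]
          simp only [hDdef, dif_neg h]
          exact mul_div_cancel_left₀ _ (hwpos s hs.1.le j).ne'
      rw [heq] at hlog
      exact hlog.hasDerivWithinAt
    · exact ((hDcont j).mono
        (by rw [uIcc_of_le ht]; exact Icc_subset_Ici_self)).intervalIntegrable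
  -- the log terms vanish in time average
  have he0 : ∀ j, Tendsto (fun t => (1 / t) * (Real.log (w t j) - Real.log (w 0 j)))
      atTop (nhds 0) := by
    intro j
    set M := |Real.log c| + |Real.log C| with hM
    have hlogbd : ∀ t : ℝ, 0 ≤ t → |Real.log (w t j)| ≤ M := by
      intro t ht
      have h1 : Real.log c ≤ Real.log (w t j) :=
        Real.log_le_log hc (hbdd t ht j).1
      have h2 : Real.log (w t j) ≤ Real.log C :=
        Real.log_le_log (hwpos t ht j) (hbdd t ht j).2
      have a1 : -|Real.log c| ≤ Real.log c := neg_abs_le _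
      have a2 : Real.log C ≤ |Real.log C| := le_abs_self _
      have a3 : (0:ℝ) ≤ |Real.log c| := abs_nonneg _
      have a4 : (0:ℝ) ≤ |Real.log C| := abs_nonneg _
      rw [abs_le]
      constructor <;> [skip; skip] <;> linarith [hM]
    have hbound : ∀ᶠ t : ℝ in atTop,
        ‖(1 / t) * (Real.log (w t j) - Real.log (w 0 j))‖ ≤ (2 * M) / t := by
      filter_upwards [eventually_ge_atTop (1:ℝ)] with t ht
      have ht0 : (0:ℝ) < t := lt_of_lt_of_le one_pos ht
      rw [norm_mul, Real.norm_eq_abs, Real.norm_eq_abs, abs_of_pos (by positivity : (0:ℝ) < 1/t)]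
      have habs : |Real.log (w t j) - Real.log (w 0 j)| ≤ 2 * M := by
        calc |Real.log (w t j) - Real.log (w 0 j)|
            ≤ |Real.log (w t j)| + |Real.log (w 0 j)| := abs_sub _ _
          _ ≤ M + M := add_le_add (hlogbd t ht0.le) (hlogbd 0 le_rfl)
          _ = 2 * M := by ring
      calc (1/t) * |Real.log (w t j) - Real.log (w 0 j)| ≤ (1/t) * (2*M) := by
            apply mul_le_mul_of_nonneg_left habs (by positivity)
        _ = (2*M)/t := by ring
    have hlim : Tendsto (fun t : ℝ => (2 * M) / t) atTop (nhds 0) :=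
      tendsto_const_nhds.div_atTop tendsto_id
    exact squeeze_zero_norm' hbound hlim
  -- relation between averages
  have hrelint : ∀ j : Fin d, ∀ t : ℝ, 0 < t →
      (1 / t) * ∫ s in (0:ℝ)..t, D j s =
        (if h : (j : ℕ) + 1 < d then x ⟨(j : ℕ) + 1, h⟩ t - x ⟨0, hd⟩ t - x j t
         else 1 - x ⟨0, hd⟩ t - x j t) := by
    intro j t ht
    by_cases h : (j : ℕ) + 1 < d
    · rw [dif_pos h]
      have : ∫ s in (0:ℝ)..t, D j s =
          (∫ s in (0:ℝ)..t, w s ⟨(j:ℕ)+1, h⟩) - (∫ s in (0:ℝ)..t, w s ⟨0, hd⟩)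
            - (∫ s in (0:ℝ)..t, w s j) := by
        simp only [hDdef, dif_pos h]
        rw [intervalIntegral.integral_sub ((hinteg _ t ht.le).sub (hinteg _ t ht.le))
          (hinteg _ t ht.le), intervalIntegral.integral_sub (hinteg _ t ht.le) (hinteg _ t ht.le)]
      rw [this, hxdef]
      ring
    · rw [dif_neg h]
      have : ∫ s in (0:ℝ)..t, D j s =
          t - (∫ s in (0:ℝ)..t, w s ⟨0, hd⟩) - (∫ s in (0:ℝ)..t, w s j) := by
        simp only [hDdef, dif_neg h]
        rw [intervalIntegral.integral_sub (intervalIntegrable_const.sub (hinteg _ t ht.le))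
          (hinteg _ t ht.le), intervalIntegral.integral_sub intervalIntegrable_const
          (hinteg _ t ht.le)]
        simp
      rw [this, hxdef]
      field_simp
      try ring
  have hrel1 : ∀ (j : Fin d) (h : (j : ℕ) + 1 < d),
      Tendsto (fun t => x ⟨(j : ℕ) + 1, h⟩ t - x ⟨0, hd⟩ t - x j t) atTop (nhds 0) := by
    intro j h
    refine (he0 j).congr' ?_
    filter_upwards [eventually_gt_atTop (0:ℝ)] with t ht
    rw [← hftc j t ht.le, hrelint j t ht, dif_pos h]
  have hrel2 : ∀ (j : Fin d), ¬ ((j : ℕ) + 1 < d) →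
      Tendsto (fun t => 1 - x ⟨0, hd⟩ t - x j t) atTop (nhds 0) := by
    intro j h
    refine (he0 j).congr' ?_
    filter_upwards [eventually_gt_atTop (0:ℝ)] with t ht
    rw [← hftc j t ht.le, hrelint j t ht, dif_neg h]
  -- induction: x_k - (k+1) x_0 → 0
  have hclaim : ∀ k, ∀ hk : k < d,
      Tendsto (fun t => x ⟨k, hk⟩ t - ((k : ℝ) + 1) * x ⟨0, hd⟩ t) atTop (nhds 0) := by
    intro k
    induction k with
    | zero =>
      intro hk
      refine Tendsto.congr (f₁ := fun _ => (0:ℝ)) (fun t => ?_) tendsto_const_nhds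
      show (0:ℝ) = x ⟨0, hd⟩ t - (((0:ℕ) : ℝ) + 1) * x ⟨0, hd⟩ t
      norm_num
    | succ n ih =>
      intro hk
      have hn : n < d := Nat.lt_of_succ_lt hk
      have h1 := hrel1 ⟨n, hn⟩ hk
      have h2 := (h1.add (ih hn))
      rw [add_zero] at h2
      refine h2.congr (fun t => ?_)
      push_cast
      ring
  -- conclude x_0 → 1/(d+1)
  have hlastlt : d - 1 < d := Nat.sub_lt hd one_pos
  have hnot : ¬ (((⟨d - 1, hlastlt⟩ : Fin d) : ℕ) + 1 < d) := by simp; omega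
  have h2 := hrel2 ⟨d - 1, hlastlt⟩ hnot
  have h3 := hclaim (d - 1) hlastlt
  have hsum := h2.add h3
  rw [add_zero] at hsum
  have hsum' : Tendsto (fun t => 1 - ((d : ℝ) + 1) * x ⟨0, hd⟩ t) atTop (nhds 0) := by
    refine hsum.congr (fun t => ?_)
    have hcast : ((d - 1 : ℕ) : ℝ) = (d : ℝ) - 1 := by
      rw [Nat.cast_sub hd]; norm_num
    rw [hcast]
    ring
  have hd1 : ((d : ℝ) + 1) ≠ 0 := by positivity
  have hx0 : Tendsto (x ⟨0, hd⟩) atTop (nhds (1 / ((d : ℝ) + 1))) := by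
    have := ((tendsto_const_nhds (x := (1:ℝ)) (f := atTop)).sub hsum').div_const ((d : ℝ) + 1)
    rw [sub_zero] at this
    refine this.congr (fun t => ?_)
    field_simp
    ring
  intro i
  have hi := hclaim (i : ℕ) i.isLt
  have hfin : (⟨(i : ℕ), i.isLt⟩ : Fin d) = i := Fin.eta i i.isLt
  rw [hfin] at hi
  have hfinal := hi.add (hx0.const_mul ((i : ℕ) + 1 : ℝ))
  rw [zero_add] at hfinal
  have : (((i : ℕ) : ℝ) + 1) * (1 / ((d : ℝ) + 1)) = (((i : ℕ) + 1 : ℝ)) / ((d : ℝ) + 1) := by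
    ring
  rw [this] at hfinal
  refine hfinal.congr (fun t => ?_)
  ring
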